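/- Let k ≥ 1 be an integer and let G = (V,E) be a finite simple graph with girth g, equipped with a linear order on V such that every index-increasing path of G has length at most k. Let α : V → ℕ be a finitely supported function with total degree |α| := Σ_v α(v) satisfying |α| < g/(2k) − 1 (equivalently, 2k(|α| + 1) < g). Then the descendant graph of the monomial x^α is a forest (acyclic). -/

import Mathlib

/-- `f : Fin (t+1) → V` is an index-increasing path of `G` of length `t`: consecutive
vertices are adjacent and the vertices are strictly increasing in the order on `V`. -/
def IndexIncreasingPath {V : Type*} [LinearOrder V] (G : SimpleGraph V)
    (t : ℕ) (f : Fin (t + 1) → V) : Prop :=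
  (∀ i : Fin t, G.Adj (f i.castSucc) (f i.succ)) ∧
  ∀ i j : Fin (t + 1), i < j → f i < f j

/-- `w` is a descendant of `u` in `G`: there is an index-increasing path from `u`
to `w` (possibly of length `0`). -/
def Descendant {V : Type*} [LinearOrder V] (G : SimpleGraph V) (u w : V) : Prop :=
  ∃ (t : ℕ) (f : Fin (t + 1) → V),
    IndexIncreasingPath G t f ∧ f 0 = u ∧ f (Fin.last t) = w

/-- The set of vertices of the descendant graph of a set `S` of vertices: the members
of `S` together with all of their descendants. -/
def descVerts {V : Type*} [LinearOrder V] (G : SimpleGraph V) (S : Set V) : Set V :=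
  {w | ∃ u ∈ S, Descendant G u w}

open SimpleGraph Walk

namespace DGAux

section basic

variable {V : Type*} {G : SimpleGraph V}

/-- Build a walk from a function along adjacent vertices. -/
def walkOfFn (f : ℕ → V) : (n : ℕ) → (∀ i < n, G.Adj (f i) (f (i+1))) → G.Walk (f 0) (f n)
  | 0, _ => Walk.nil
  | (n+1), h =>
      Walk.cons (h 0 (Nat.succ_pos n))
        (walkOfFn (fun i => f (i+1)) n (fun i hi => h (i+1) (by omega)))

@[simp] lemma length_walkOfFn (f : ℕ → V) (n : ℕ) (h : ∀ i < n, G.Adj (f i) (f (i+1))) :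
    (walkOfFn (G := G) f n h).length = n := by
  induction n generalizing f with
  | zero => rfl
  | succ n ih => simp [walkOfFn, ih]

lemma getVert_walkOfFn (f : ℕ → V) (n : ℕ) (h : ∀ i < n, G.Adj (f i) (f (i+1)))
    {i : ℕ} (hi : i ≤ n) : (walkOfFn (G := G) f n h).getVert i = f i := by
  induction n generalizing f i with
  | zero => interval_cases i; rfl
  | succ n ih =>
      cases i with
      | zero => rfl
      | succ i => exact ih (fun i => f (i+1)) _ (by omega)

lemma support_walkOfFn (f : ℕ → V) (n : ℕ) (h : ∀ i < n, G.Adj (f i) (f (i+1))) :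
    (walkOfFn (G := G) f n h).support = (List.range (n+1)).map f := by
  induction n generalizing f with
  | zero => rfl
  | succ n ih =>
      rw [walkOfFn, Walk.support_cons, ih]
      conv_rhs => rw [List.range_succ_eq_map]
      simp [List.map_map, Function.comp_def]

lemma isPath_walkOfFn (f : ℕ → V) (n : ℕ) (h : ∀ i < n, G.Adj (f i) (f (i+1)))
    (hinj : ∀ i ≤ n, ∀ j ≤ n, f i = f j → i = j) :
    (walkOfFn (G := G) f n h).IsPath := by
  apply Walk.IsPath.mk'
  rw [support_walkOfFn]
  refine List.Nodup.map_on ?_ List.nodup_range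
  intro i hi j hj hij
  exact hinj i (Nat.lt_succ_iff.mp (List.mem_range.mp hi))
    j (Nat.lt_succ_iff.mp (List.mem_range.mp hj)) hij

lemma support_getElem_eq_getVert {u v : V} (p : G.Walk u v) (i : ℕ)
    (hi : i < p.support.length) : p.support[i] = p.getVert i := by
  induction p generalizing i with
  | nil => simp at hi; subst hi; simp [Walk.getVert]
  | cons h p ih =>
      cases i with
      | zero => simp [Walk.getVert]
      | succ i =>
          simp only [Walk.support_cons]
          rw [List.getElem_cons_succ]
          apply ih

lemma getVert_eq_tail_getElem {u : V} (p : G.Walk u u) {m : ℕ} (hm1 : 1 ≤ m)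
    (hm : m ≤ p.length) :
    p.getVert m = p.support.tail[m-1]'(by simp [Walk.length_support]; omega) := by
  rw [List.getElem_tail]
  have h2 : m - 1 + 1 < p.support.length := by simp [Walk.length_support]; omega
  have : p.support[m-1+1]'h2 = p.support[m]'(by simp [Walk.length_support]; omega) := by
    congr 1
    omega
  rw [this]
  exact (support_getElem_eq_getVert p m (by simp [Walk.length_support]; omega)).symm

/-- vertices of a cycle are distinct for indices `< length`. -/
lemma IsCycle.getVert_inj {u : V} {p : G.Walk u u} (hp : p.IsCycle)
    {i j : ℕ} (hi : i < p.length) (hj : j < p.length) (hij : p.getVert i = p.getVert j) :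
    i = j := by
  have h3 := hp.three_le_length
  have hnd := hp.support_nodup
  have htail : p.support.tail.length = p.length := by simp [Walk.length_support]
  have key : ∀ m : ℕ, 1 ≤ m → m < p.length → p.getVert m ≠ u := by
    intro m h1 h2 hcon
    have e1 := getVert_eq_tail_getElem p h1 (by omega)
    have e2 := getVert_eq_tail_getElem p (m := p.length) (by omega) le_rfl
    rw [Walk.getVert_length] at e2
    rw [hcon] at e1
    have e3 := (e1.symm.trans e2)
    have := (List.Nodup.getElem_inj_iff hnd).mp e3
    omega
  rcases Nat.eq_zero_or_pos i with rfl | hi0 <;> rcases Nat.eq_zero_or_pos j with rfl | hj0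
  · rfl
  · rw [Walk.getVert_zero] at hij; exact absurd hij.symm (key j hj0 hj)
  · rw [Walk.getVert_zero] at hij; exact absurd hij (key i hi0 hi)
  · have e1 := getVert_eq_tail_getElem p hi0 (by omega)
    have e2 := getVert_eq_tail_getElem p hj0 (by omega)
    rw [e1, e2] at hij
    have := (List.Nodup.getElem_inj_iff hnd).mp hij
    omega

lemma fromEdgeSet_le' {s : Set (Sym2 V)} (h : s ⊆ G.edgeSet) : fromEdgeSet s ≤ G := by
  have := fromEdgeSet_mono h
  rwa [fromEdgeSet_edgeSet] at this

variable [DecidableEq V]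

lemma length_rotate {u v : V} (c : G.Walk v v) (h : u ∈ c.support) :
    (c.rotate u h).length = c.length := by
  have := congrArg Walk.length (c.take_spec h)
  simp only [Walk.length_append] at this
  simp only [Walk.rotate, Walk.length_append]
  omega

lemma mem_support_rotate {u v z : V} (c : G.Walk v v) (h : u ∈ c.support) :
    z ∈ (c.rotate u h).support ↔ z ∈ c.support := by
  conv_rhs => rw [← c.take_spec h]
  simp only [Walk.rotate, Walk.mem_support_append_iff]
  tauto

end basic

lemma chain_lt' {V : Type*} [Preorder V] {g : ℕ → V} {r : ℕ} (h : ∀ i < r, g i < g (i+1)) :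
    ∀ i j, i < j → j ≤ r → g i < g j := by
  intro i j hij hjr
  induction j with
  | zero => omega
  | succ j ih =>
      rcases Nat.lt_or_ge i j with h' | h'
      · exact lt_trans (ih h' (by omega)) (h j (by omega))
      · have : i = j := by omega
        subst this
        exact h i (by omega)

lemma find_first {P : ℕ → Prop} {K : ℕ} (hex : ∃ a, ¬ P a ∧ a ≤ K) (h0 : P 0) :
    ∃ a, 1 ≤ a ∧ a ≤ K ∧ ¬ P a ∧ ∀ b < a, P b := by
  classical
  have hex' : ∃ a, ¬ P a := ⟨hex.choose, hex.choose_spec.1⟩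
  refine ⟨Nat.find hex', ?_, ?_, Nat.find_spec hex', ?_⟩
  · rcases Nat.eq_zero_or_pos (Nat.find hex') with h | h
    · exact absurd (h ▸ Nat.find_spec hex') (not_not.mpr h0)
    · exact h
  · exact le_trans (Nat.find_min' hex' hex.choose_spec.1) hex.choose_spec.2
  · intro b hb
    exact not_not.mp (Nat.find_min hex' hb)

section runs

variable {V : Type*} [LinearOrder V] {G : SimpleGraph V} {k : ℕ}

lemma run_le (hpaths : ∀ (t : ℕ) (f : Fin (t + 1) → V), IndexIncreasingPath G t f → t ≤ k)
    {g : ℕ → V} {r : ℕ} (hadj : ∀ i < r, G.Adj (g i) (g (i+1)))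
    (hlt : ∀ i < r, g i < g (i+1)) : r ≤ k := by
  apply hpaths r (fun i : Fin (r+1) => g i)
  constructor
  · intro i
    exact hadj i i.isLt
  · intro i j hij
    exact chain_lt' hlt i j hij (Nat.lt_succ_iff.mp j.isLt)

lemma run_le_desc (hpaths : ∀ (t : ℕ) (f : Fin (t + 1) → V), IndexIncreasingPath G t f → t ≤ k)
    {g : ℕ → V} {r : ℕ} (hadj : ∀ i < r, G.Adj (g i) (g (i+1)))
    (hgt : ∀ i < r, g (i+1) < g i) : r ≤ k := by
  apply run_le hpaths (g := fun i => g (r - i))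
  · intro i hi
    have e : r - i - 1 + 1 = r - i := by omega
    have h2 := (hadj (r - i - 1) (by omega)).symm
    rw [e] at h2
    exact h2
  · intro i hi
    have h2 := hgt (r - i - 1) (by omega)
    have e : r - i - 1 + 1 = r - i := by omega
    rw [e] at h2
    exact h2

lemma next_min (hpaths : ∀ (t : ℕ) (f : Fin (t + 1) → V), IndexIncreasingPath G t f → t ≤ k)
    {gv : ℕ → V} {L : ℕ} (hadj : ∀ i < L, G.Adj (gv i) (gv (i+1)))
    {j : ℕ} (hjL : j + 2*k + 1 ≤ L) (hasc : gv j < gv (j+1)) :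
    ∃ j', j + 2 ≤ j' ∧ j' ≤ j + 2*k ∧ gv j' < gv (j'-1) ∧ gv j' < gv (j'+1) := by
  have hex1 : ∃ a, ¬ (gv (j+a) < gv (j+a+1)) ∧ a ≤ k := by
    by_contra hcon
    push_neg at hcon
    have : k + 1 ≤ k := by
      refine run_le hpaths (g := fun i => gv (j+i)) (r := k+1) ?_ ?_
      · intro i hi; exact hadj (j+i) (by omega)
      · intro i hi
        by_contra hlt
        exact absurd (hcon i (not_lt.mp hlt)) (by omega)
    omega
  obtain ⟨a, ha1, hak, ha, hamin⟩ := find_first hex1 (by simpa using hasc)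
  have hdesc0 : gv (j+a+1) < gv (j+a) := by
    have hle : gv (j+a+1) ≤ gv (j+a) := not_lt.mp ha
    have hne : gv (j+a) ≠ gv (j+a+1) := (hadj (j+a) (by omega)).ne
    exact hle.lt_of_ne (Ne.symm hne)
  have hex2 : ∃ b, ¬ (gv (j+a+b+1) < gv (j+a+b)) ∧ b ≤ k := by
    by_contra hcon
    push_neg at hcon
    have : k + 1 ≤ k := by
      refine run_le_desc hpaths (g := fun i => gv (j+a+i)) (r := k+1) ?_ ?_
      · intro i hi; exact hadj (j+a+i) (by omega)
      · intro i hi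
        by_contra hlt
        exact absurd (hcon i (not_lt.mp hlt)) (by omega)
    omega
  obtain ⟨b, hb1, hbk, hb, hbmin⟩ := find_first hex2 (by simpa using hdesc0)
  refine ⟨j + a + b, by omega, by omega, ?_, ?_⟩
  · have h2 := hbmin (b-1) (by omega)
    have e1 : j + a + (b-1) + 1 = j + a + b := by omega
    have e2 : j + a + (b-1) = j + a + b - 1 := by omega
    rw [e1, e2] at h2
    exact h2
  · have hle : gv (j+a+b) ≤ gv (j+a+b+1) := not_lt.mp hb
    have hne : gv (j+a+b) ≠ gv (j+a+b+1) := (hadj (j+a+b) (by omega)).ne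
    exact hle.lt_of_ne hne

lemma minima_chain (hpaths : ∀ (t : ℕ) (f : Fin (t + 1) → V), IndexIncreasingPath G t f → t ≤ k)
    {gv : ℕ → V} {L : ℕ} (hadj : ∀ i < L, G.Adj (gv i) (gv (i+1)))
    (h0 : gv 0 < gv 1) (n : ℕ) (hL : 2*k*n + 2*k + 1 ≤ L) :
    ∃ js : ℕ → ℕ, js 0 = 0 ∧ (∀ i ≤ n, js i ≤ 2*k*i) ∧
      (∀ i ≤ n, gv (js i) < gv (js i + 1)) ∧
      (∀ i ≤ n, 1 ≤ i → gv (js i) < gv (js i - 1)) ∧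
      (∀ i < n, js i + 2 ≤ js (i+1)) := by
  induction n with
  | zero =>
      refine ⟨fun _ => 0, rfl, ?_, ?_, ?_, ?_⟩
      · intro i hi; exact Nat.zero_le _
      · intro i hi; interval_cases i; simpa
      · intro i hi h1; omega
      · intro i hi; omega
  | succ n ih =>
      have hLn : 2*k*n + 2*k + 1 ≤ L := by
        have : 2*k*(n+1) = 2*k*n + 2*k := by ring
        omega
      obtain ⟨js, hjs0, hjsb, hasc, hdesc, hstep⟩ := ih hLn
      obtain ⟨j', hj'2, hj'le, hj'desc, hj'asc⟩ :=
        next_min hpaths hadj (j := js n)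
          (by have := hjsb n le_rfl; omega) (hasc n le_rfl)
      have hj'bound : j' ≤ 2*k*(n+1) := by
        have h1 := hjsb n le_rfl
        have : 2*k*(n+1) = 2*k*n + 2*k := by ring
        omega
      refine ⟨fun i => if i ≤ n then js i else j', by simp [hjs0], ?_, ?_, ?_, ?_⟩
      · intro i hi
        by_cases h : i ≤ n
        · simpa [h] using hjsb i h
        · have hin : i = n + 1 := by omega
          subst hin
          simpa [h] using hj'bound
      · intro i hi
        by_cases h : i ≤ n
        · simpa [h] using hasc i h
        · simpa [h] using hj'asc
      · intro i hi h1
        by_cases h : i ≤ n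
        · simpa [h] using hdesc i h h1
        · simpa [h] using hj'desc
      · intro i hi
        by_cases h : i < n
        · have h1 : i ≤ n := by omega
          have h2 : i + 1 ≤ n := by omega
          simpa [h1, h2] using hstep i h
        · have hin : i = n := by omega
          subst hin
          have h2 : ¬ (i + 1 ≤ i) := by omega
          simpa [h2] using hj'2

end runs

end DGAux

theorem descendant_graph_isAcyclic
    {V : Type*} [Fintype V] [LinearOrder V]
    (k : ℕ) (hk : 1 ≤ k) (G : SimpleGraph V)
    (hpaths : ∀ (t : ℕ) (f : Fin (t + 1) → V), IndexIncreasingPath G t f → t ≤ k)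
    (α : V → ℕ)
    (hα : ((2 * k * ((∑ v, α v) + 1) : ℕ) : ℕ∞) < G.egirth) :
    (G.induce (descVerts G (Function.support α))).IsAcyclic := by
  classical
  set N : ℕ := ∑ v, α v with hN
  set D : Set V := descVerts G (Function.support α) with hD
  by_contra hcyc
  simp only [SimpleGraph.IsAcyclic] at hcyc
  push_neg at hcyc
  obtain ⟨v0, c, hc⟩ := hcyc
  -- map the cycle into G
  set emb : G.induce D ↪g G := SimpleGraph.Embedding.induce D with hemb
  set cG : G.Walk (emb.toHom v0) (emb.toHom v0) := c.map emb.toHom with hcG_def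
  have hcG : cG.IsCycle := hc.map emb.injective
  -- rotate to start at minimal vertex
  have hne : cG.support.toFinset.Nonempty :=
    ⟨emb.toHom v0, List.mem_toFinset.mpr cG.start_mem_support⟩
  obtain ⟨u₀, hu₀m, hu₀min⟩ := cG.support.toFinset.exists_min_image id hne
  have hu₀sup : u₀ ∈ cG.support := List.mem_toFinset.mp hu₀m
  set w : G.Walk u₀ u₀ := cG.rotate u₀ hu₀sup with hw_def
  have hw : w.IsCycle := hcG.rotate hu₀sup
  set L : ℕ := w.length with hL_def
  have hLc : L = cG.length := DGAux.length_rotate cG hu₀sup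
  set gv : ℕ → V := w.getVert with hgv_def
  have hadjG : ∀ i < L, G.Adj (gv i) (gv (i+1)) := fun i hi => w.adj_getVert_succ hi
  -- all vertices of the cycle lie in D
  have hDsup : ∀ z ∈ w.support, z ∈ D := by
    intro z hz
    have h1 := (DGAux.mem_support_rotate cG hu₀sup).mp hz
    rw [hcG_def, Walk.support_map] at h1
    obtain ⟨x, hx, rfl⟩ := List.mem_map.mp h1
    exact x.2
  have hgvD : ∀ i, i ≤ L → gv i ∈ D := by
    intro i hi
    exact hDsup _ (Walk.mem_support_iff_exists_getVert.mpr ⟨i, rfl, hi⟩)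
  -- length bound from the girth
  have hBL : 2*k*(N+1) < L := by
    have h1 : G.egirth ≤ (cG.length : ℕ∞) := le_egirth.mp le_rfl _ cG hcG
    have h2 : ((2*k*(N+1) : ℕ) : ℕ∞) < (cG.length : ℕ∞) := lt_of_lt_of_le hα h1
    rw [hLc]
    exact_mod_cast h2
  have hL3 := hw.three_le_length
  -- u₀ is the strict minimum
  have hminsup : ∀ z ∈ w.support, u₀ ≤ z := by
    intro z hz
    have h1 := (DGAux.mem_support_rotate cG hu₀sup).mp hz
    exact hu₀min z (List.mem_toFinset.mpr h1)
  have hstrict : ∀ i, 1 ≤ i → i < L → u₀ < gv i := by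
    intro i h1 h2
    have hle : u₀ ≤ gv i :=
      hminsup _ (Walk.mem_support_iff_exists_getVert.mpr ⟨i, rfl, by omega⟩)
    rcases hle.lt_or_eq with h | h
    · exact h
    · exfalso
      have h0 : gv 0 = u₀ := Walk.getVert_zero w
      have := DGAux.IsCycle.getVert_inj hw (by omega) h2 (h0.trans h)
      omega
  have h0asc : gv 0 < gv 1 := by
    have : gv 0 = u₀ := Walk.getVert_zero w
    rw [this]
    exact hstrict 1 le_rfl (by omega)
  -- the chain of local minima
  have hL2 : 2*k*N + 2*k + 1 ≤ L := by
    have : 2*k*(N+1) = 2*k*N + 2*k := by ring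
    omega
  obtain ⟨js, hjs0, hjsb, hascjs, hdescjs, hstepjs⟩ :=
    DGAux.minima_chain hpaths hadjG h0asc N hL2
  have hjsN : ∀ i, i ≤ N → js i ≤ 2*k*N := by
    intro i hi
    exact le_trans (hjsb i hi) (Nat.mul_le_mul_left _ hi)
  -- ancestors in the support
  have hanc : ∀ i, ∃ u, i ≤ N → (α u ≠ 0 ∧ Descendant G u (gv (js i))) := by
    intro i
    by_cases hi : i ≤ N
    · obtain ⟨u, huS, hud⟩ := hgvD (js i) (by have := hjsN i hi; omega)
      exact ⟨u, fun _ => ⟨huS, hud⟩⟩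
    · exact ⟨u₀, fun h => absurd h hi⟩
  choose F hF using hanc
  -- pigeonhole
  set T : Finset V := Finset.univ.filter (fun v => α v ≠ 0) with hT
  have hTcard : T.card ≤ N := by
    calc T.card = ∑ _v ∈ T, 1 := by simp
      _ ≤ ∑ v ∈ T, α v := Finset.sum_le_sum (fun v hv => by
            have := (Finset.mem_filter.mp hv).2; omega)
      _ ≤ ∑ v, α v := Finset.sum_le_sum_of_subset (Finset.filter_subset _ _)
  have hmaps : ∀ i ∈ Finset.range (N+1), F i ∈ T := by
    intro i hi
    have := (hF i (Nat.lt_succ_iff.mp (Finset.mem_range.mp hi))).1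
    simp [hT, this]
  obtain ⟨i₁, hi₁, i₂, hi₂, hne12, hFeq⟩ :=
    Finset.exists_ne_map_eq_of_card_lt_of_maps_to
      (by rw [Finset.card_range]; omega) hmaps
  -- the key contradiction
  have key : ∀ i i', i < i' → i' ≤ N → F i = F i' → False := by
    intro i i' hii' hi'N hFF
    have hiN : i ≤ N := by omega
    set a : ℕ := js i with ha_def
    set b : ℕ := js i' with hb_def
    have hab2 : a + 2 ≤ b := by
      clear_value a b
      subst ha_def hb_def
      clear hFF
      induction i' with
      | zero => omega
      | succ q ih =>
          rcases Nat.lt_or_ge i q with h | h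
          · have h2 := hstepjs q (by omega)
            have := ih (by omega) (by omega)
            omega
          · have : i = q := by omega
            subst this
            exact hstepjs i (by omega)
    have hbB : b ≤ 2*k*N := hjsN i' hi'N
    have haL : a < L := by have := hjsN i hiN; omega
    have hbL : b < L := by omega
    set x : V := gv a with hx_def
    set y : V := gv b with hy_def
    have hxy : x ≠ y := by
      intro h
      have := DGAux.IsCycle.getVert_inj hw haL hbL h
      omega
    -- descendant paths from the common ancestor
    obtain ⟨t, f, hf, hf0, hft⟩ := (hF i hiN).2
    have hD2 := (hF i' hi'N).2
    rw [← hFF] at hD2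
    obtain ⟨t', f', hf', hf'0, hf't⟩ := hD2
    have htk : t ≤ k := hpaths t f hf
    have ht'k : t' ≤ k := hpaths t' f' hf'
    set fN : ℕ → V := fun m => f ⟨min m t, Nat.lt_succ_of_le (Nat.min_le_right _ _)⟩ with hfN_def
    set fN' : ℕ → V := fun m => f' ⟨min m t', Nat.lt_succ_of_le (Nat.min_le_right _ _)⟩ with hfN'_def
    have hfN_eq : ∀ m (hm : m ≤ t), fN m = f ⟨m, by omega⟩ := by
      intro m h; simp only [hfN_def]; congr 1; exact Fin.ext (min_eq_left h)
    have hfN'_eq : ∀ m (hm : m ≤ t'), fN' m = f' ⟨m, by omega⟩ := by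
      intro m h; simp only [hfN'_def]; congr 1; exact Fin.ext (min_eq_left h)
    have hfadj : ∀ m, m < t → G.Adj (fN m) (fN (m+1)) := by
      intro m hm
      rw [hfN_eq m (by omega), hfN_eq (m+1) (by omega)]
      exact hf.1 ⟨m, hm⟩
    have hf'adj : ∀ m, m < t' → G.Adj (fN' m) (fN' (m+1)) := by
      intro m hm
      rw [hfN'_eq m (by omega), hfN'_eq (m+1) (by omega)]
      exact hf'.1 ⟨m, hm⟩
    have hfmono : ∀ p q, p < q → q ≤ t → fN p < fN q := by
      intro p q h1 h2
      rw [hfN_eq p (by omega), hfN_eq q h2]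
      exact hf.2 _ _ (by exact Fin.mk_lt_mk.mpr h1)
    have hf'mono : ∀ p q, p < q → q ≤ t' → fN' p < fN' q := by
      intro p q h1 h2
      rw [hfN'_eq p (by omega), hfN'_eq q h2]
      exact hf'.2 _ _ (by exact Fin.mk_lt_mk.mpr h1)
    have hfx : fN t = x := by rw [hfN_eq t le_rfl]; exact hft
    have hf'y : fN' t' = y := by rw [hfN'_eq t' le_rfl]; exact hf't
    have hfu : fN 0 = fN' 0 := by
      rw [hfN_eq 0 (by omega), hfN'_eq 0 (by omega)]
      rw [show (⟨0, by omega⟩ : Fin (t+1)) = 0 from rfl,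
        show (⟨0, by omega⟩ : Fin (t'+1)) = 0 from rfl, hf0, hf'0]
    -- last meeting point of the two monotone paths
    set P : ℕ → Prop := fun jj => ∃ ii, ii ≤ t ∧ fN ii = fN' jj with hP_def
    have hP0 : P 0 := ⟨0, by omega, hfu⟩
    set jstar : ℕ := Nat.findGreatest P t' with hjstar_def
    have hPj : P jstar := Nat.findGreatest_spec (Nat.zero_le t') hP0
    have hjle : jstar ≤ t' := Nat.findGreatest_le t'
    have hjmax : ∀ jj, jstar < jj → jj ≤ t' → ¬ P jj := by
      intro jj h1 h2
      exact Nat.findGreatest_is_greatest h1 h2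
    obtain ⟨istar, hist, hiz⟩ := hPj
    set m : ℕ := t - istar with hm_def
    set n' : ℕ := t' - jstar with hn'_def
    set nR : ℕ := m + n' with hnR_def
    set ρ : ℕ → V := fun jj => if jj ≤ m then fN (t - jj) else fN' (jstar + (jj - m))
      with hρ_def
    have hρ_lo : ∀ jj, jj ≤ m → ρ jj = fN (t - jj) := by
      intro jj h; simp only [hρ_def, if_pos h]
    have hρ_hi : ∀ jj, m < jj → ρ jj = fN' (jstar + (jj - m)) := by
      intro jj h; simp only [hρ_def]; rw [if_neg (show ¬ jj ≤ m by omega)]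
    have hρadj : ∀ idx < nR, G.Adj (ρ idx) (ρ (idx+1)) := by
      intro idx hidx
      rcases Nat.lt_or_ge idx m with h1 | h1
      · rw [hρ_lo idx (by omega), hρ_lo (idx+1) (by omega)]
        have := (hfadj (t - idx - 1) (by omega)).symm
        have e1 : t - idx - 1 + 1 = t - idx := by omega
        have e2 : t - (idx + 1) = t - idx - 1 := by omega
        rw [e1] at this
        rw [e2]
        exact this
      · rcases Nat.eq_or_lt_of_le h1 with h2 | h2
        · -- idx = m
          rw [hρ_lo idx (by omega), hρ_hi (idx+1) (by omega)]
          have hz : fN (t - idx) = fN' jstar := by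
            rw [show t - idx = istar by omega]
            exact hiz
          rw [hz, show idx + 1 - m = 1 by omega]
          exact hf'adj jstar (by omega)
        · rw [hρ_hi idx (by omega), hρ_hi (idx+1) (by omega)]
          have := hf'adj (jstar + (idx - m)) (by omega)
          rw [show jstar + (idx + 1 - m) = jstar + (idx - m) + 1 by omega]
          exact this
    have hρinj : ∀ p, p ≤ nR → ∀ q, q ≤ nR → ρ p = ρ q → p = q := by
      have main : ∀ p q, p < q → q ≤ nR → ρ p ≠ ρ q := by
        intro p q hpq hqR heq
        rcases Nat.lt_or_ge m q with hq1 | hq1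
        · rcases Nat.lt_or_ge m p with hp1 | hp1
          · -- both in second branch
            rw [hρ_hi p hp1, hρ_hi q hq1] at heq
            have := hf'mono (jstar + (p - m)) (jstar + (q - m)) (by omega) (by omega)
            exact absurd heq this.ne
          · -- p in first, q in second: contradicts maximality
            rw [hρ_lo p hp1, hρ_hi q hq1] at heq
            exact hjmax (jstar + (q - m)) (by omega) (by omega) ⟨t - p, by omega, heq⟩
        · -- both in first branch
          rw [hρ_lo p (by omega), hρ_lo q (by omega)] at heq
          have := hfmono (t - q) (t - p) (by omega) (by omega)
          exact absurd heq.symm this.ne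
      intro p hp q hq heq
      rcases lt_trichotomy p q with h | h | h
      · exact absurd heq (main p q h hq)
      · exact h
      · exact absurd heq.symm (main q p h hp)
    -- the two walks
    have hAadj : ∀ idx < b - a, G.Adj (gv (a+idx)) (gv (a+idx+1)) := by
      intro idx hidx
      exact hadjG (a+idx) (by omega)
    set A : G.Walk x y :=
      (DGAux.walkOfFn (fun idx => gv (a+idx)) (b-a) hAadj).copy
        (by rw [Nat.add_zero]) (by congr 1; omega) with hA_def
    have hρ0 : ρ 0 = x := by
      rw [hρ_lo 0 (by omega), Nat.sub_zero, hfx]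
    have hρn : ρ nR = y := by
      rcases Nat.eq_zero_or_pos n' with h1 | h1
      · rw [hρ_lo nR (by omega)]
        rw [show t - nR = istar by omega, hiz, show jstar = t' by omega, hf'y]
      · rw [hρ_hi nR (by omega), show jstar + (nR - m) = t' by omega, hf'y]
    set R : G.Walk x y := (DGAux.walkOfFn ρ nR hρadj).copy hρ0 hρn with hR_def
    have hApath : A.IsPath := by
      rw [hA_def, Walk.isPath_copy]
      apply DGAux.isPath_walkOfFn
      intro p hp q hq heq
      have := DGAux.IsCycle.getVert_inj hw (i := a+p) (j := a+q) (by omega) (by omega) heq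
      omega
    have hRpath : R.IsPath := by
      rw [hR_def, Walk.isPath_copy]
      exact DGAux.isPath_walkOfFn _ _ _ (fun p hp q hq heq => hρinj p hp q hq heq)
    have hlenA : A.length = b - a := by
      rw [hA_def, Walk.length_copy, DGAux.length_walkOfFn]
    have hlenR : R.length = nR := by
      rw [hR_def, Walk.length_copy, DGAux.length_walkOfFn]
    have hnRk : nR ≤ 2*k := by omega
    have hAgetVert : ∀ idx, idx ≤ b - a → A.getVert idx = gv (a + idx) := by
      intro idx hidx
      rw [hA_def, Walk.getVert_copy, DGAux.getVert_walkOfFn _ _ _ hidx]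
    have hRgetVert : ∀ idx, idx ≤ nR → R.getVert idx = ρ idx := by
      intro idx hidx
      rw [hR_def, Walk.getVert_copy, DGAux.getVert_walkOfFn _ _ _ hidx]
    -- R ≠ A
    have hRA : R ≠ A := by
      intro hEq
      have hlen_eq : nR = b - a := by rw [← hlenR, hEq, hlenA]
      have hnR1 : 1 ≤ nR := by omega
      rcases Nat.eq_zero_or_pos m with hm0 | hm1
      · -- R is purely ascending; compare last-but-one vertices
        have e1 : R.getVert (nR - 1) = fN' (jstar + (nR - 1)) := by
          rw [hRgetVert _ (by omega), hρ_hi (nR-1) (by omega)]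
          congr 2
          omega
        have e2 : A.getVert (nR - 1) = gv (b - 1) := by
          rw [hAgetVert _ (by omega)]
          congr 1
          omega
        have h1 : fN' (jstar + (nR - 1)) < y := by
          have := hf'mono (jstar + (nR - 1)) t' (by omega) le_rfl
          rwa [hf'y] at this
        have h2 : y < gv (b - 1) := hdescjs i' hi'N (by omega)
        have efinal : fN' (jstar + (nR - 1)) = gv (b - 1) := by
          rw [← e1, hEq, e2]
        rw [efinal] at h1
        exact absurd (lt_trans h1 h2) (lt_irrefl _)
      · -- R starts by descending; compare second vertices
        have e1 : R.getVert 1 = fN (t - 1) := by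
          rw [hRgetVert 1 (by omega), hρ_lo 1 hm1]
        have e2 : A.getVert 1 = gv (a + 1) := by
          rw [hAgetVert 1 (by omega)]
        have h1 : fN (t - 1) < x := by
          have := hfmono (t-1) t (by omega) le_rfl
          rwa [hfx] at this
        have h2 : x < gv (a + 1) := hascjs i hiN
        have efinal : fN (t - 1) = gv (a + 1) := by
          rw [← e1, hEq, e2]
        rw [efinal] at h1
        exact absurd (lt_trans h1 h2) (lt_irrefl _)
    -- the union of the two paths
    set E' : Set (Sym2 V) := {e | e ∈ R.edges} ∪ {e | e ∈ A.edges} with hE'_def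
    have hE'sub : E' ⊆ G.edgeSet := by
      rintro e (he | he)
      · exact R.edges_subset_edgeSet he
      · exact A.edges_subset_edgeSet he
    set H' : SimpleGraph V := SimpleGraph.fromEdgeSet E' with hH'_def
    have hRtrans : ∀ e ∈ R.edges, e ∈ H'.edgeSet := by
      intro e he
      rw [hH'_def, edgeSet_fromEdgeSet]
      exact ⟨Or.inl he, G.not_isDiag_of_mem_edgeSet (R.edges_subset_edgeSet he)⟩
    have hAtrans : ∀ e ∈ A.edges, e ∈ H'.edgeSet := by
      intro e he
      rw [hH'_def, edgeSet_fromEdgeSet]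
      exact ⟨Or.inr he, G.not_isDiag_of_mem_edgeSet (A.edges_subset_edgeSet he)⟩
    by_cases hH'ac : H'.IsAcyclic
    · -- two distinct paths in an acyclic graph
      have hpu := isAcyclic_iff_path_unique.mp hH'ac
        ⟨R.transfer H' hRtrans, hRpath.transfer hRtrans⟩
        ⟨A.transfer H' hAtrans, hApath.transfer hAtrans⟩
      have htr : R.transfer H' hRtrans = A.transfer H' hAtrans := by
        exact Subtype.ext_iff.mp hpu
      have hback : R = A := by
        have h1 : (R.transfer H' hRtrans).transfer G
            (by rw [Walk.edges_transfer]; exact R.edges_subset_edgeSet) = R := by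
          rw [Walk.transfer_transfer, Walk.transfer_self]
        have h2 : (A.transfer H' hAtrans).transfer G
            (by rw [Walk.edges_transfer]; exact A.edges_subset_edgeSet) = A := by
          rw [Walk.transfer_transfer, Walk.transfer_self]
        rw [← h1, ← h2]
        congr 1
      exact hRA hback
    · -- a short cycle in G
      simp only [SimpleGraph.IsAcyclic] at hH'ac
      push_neg at hH'ac
      obtain ⟨z, zc, hzc⟩ := hH'ac
      have hznodup : zc.edges.Nodup := hzc.isCircuit.isTrail.edges_nodup
      have hzsub : zc.edges ⊆ R.edges ++ A.edges := by
        intro e he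
        have h1 := zc.edges_subset_edgeSet he
        rw [hH'_def, edgeSet_fromEdgeSet] at h1
        rcases h1.1 with h | h
        · exact List.mem_append_left _ h
        · exact List.mem_append_right _ h
      have hzlen : zc.length ≤ 2*k*(N+1) := by
        have h1 := (hznodup.subperm hzsub).length_le
        rw [List.length_append, Walk.length_edges, Walk.length_edges, Walk.length_edges]
          at h1
        have h2 : 2*k*(N+1) = 2*k*N + 2*k := by ring
        omega
      have hle : H' ≤ G := DGAux.fromEdgeSet_le' hE'sub
      have hzc' : (zc.mapLe hle).IsCycle := hzc.mapLe hle
      have h5 : G.egirth ≤ (zc.length : ℕ∞) := by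
        have h6 := le_egirth.mp le_rfl _ _ hzc'
        have h7 : (zc.mapLe hle).length = zc.length := by simp [Walk.mapLe]
        rwa [h7] at h6
      have h8 : ((2*k*(N+1) : ℕ) : ℕ∞) < (zc.length : ℕ∞) := lt_of_lt_of_le hα h5
      have h9 : 2*k*(N+1) < zc.length := by exact_mod_cast h8
      omega
  rcases lt_or_gt_of_ne hne12 with h | h
  · exact key i₁ i₂ h (Nat.lt_succ_iff.mp (Finset.mem_range.mp hi₂)) hFeq
  · exact key i₂ i₁ h (Nat.lt_succ_iff.mp (Finset.mem_range.mp hi₁)) hFeq.symm
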